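/- For u ∈ V_0 and an arbitrary constant C, |u|_{H¹(Ω_k)}² ≲ ∑_{x ∈ 𝒱_k} |u(x) − C|², with the implicit constant independent of h, H_k, and u. -/

import Mathlib

private lemma sum_seminorm {X ι : Type} [Fintype ι] (s : (X → ℝ) → ℝ)
    (hadd : ∀ f g : X → ℝ, s (f + g) ≤ s f + s g)
    (hzero : s 0 = 0) (f : ι → X → ℝ) :
    s (∑ x, f x) ≤ ∑ x, s (f x) := by
  classical
  induction (Finset.univ : Finset ι) using Finset.induction with
  | empty => simpa using hzero.le
  | insert _ _ hx ih =>
    rw [Finset.sum_insert hx, Finset.sum_insert hx]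
    exact le_trans (hadd _ _) (by gcongr)

/-- For `u ∈ V₀` (the coarse space spanned by discrete harmonic nodal basis
functions `φ_x`, `x ∈ 𝒱_k`, with `|φ_x|_{H¹(Ω_k)} ≤ c` and `∑_x φ_x = 1` on `Ω_k`) and an
arbitrary constant `Cst`, one has `|u|²_{H¹(Ω_k)} ≤ C ∑_{x∈𝒱_k} |u(x) − Cst|²`, with `C`
depending only on the shape-regularity constants `c` and the bound `n` on the number of
vertices of `Ω_k`, and in particular independent of `h`, `H_k` and `u`.
Here `s` is the `H¹(Ω_k)` seminorm (subadditive, absolutely homogeneous, vanishing on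
constants), `p x` is the vertex point associated with `x ∈ 𝒱_k`. -/
theorem stmt12 (c : ℝ) (hc : 0 < c) (n : ℕ) :
    ∃ C : ℝ, 0 < C ∧
      ∀ (X ι : Type) (_ : Fintype ι), Fintype.card ι ≤ n →
      ∀ s : (X → ℝ) → ℝ,
        (∀ f g : X → ℝ, s (f + g) ≤ s f + s g) →
        (∀ (r : ℝ) (f : X → ℝ), s (r • f) = |r| * s f) →
        (∀ r : ℝ, s (fun _ => r) = 0) →
      ∀ (φ : ι → X → ℝ) (p : ι → X),
        (∀ x, s (φ x) ≤ c) →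
        (∑ x, φ x) = (fun _ => (1 : ℝ)) →
      ∀ u : X → ℝ, u = (∑ x, u (p x) • φ x) →
      ∀ Cst : ℝ, s u ^ 2 ≤ C * ∑ x, (u (p x) - Cst) ^ 2 := by
  classical
  refine ⟨c ^ 2 * (n + 1), by positivity, ?_⟩
  intro X ι _ hcard s hadd hsmul hconst φ p hφ hpart u hu Cst
  have hzero : s 0 = 0 := by
    have := hconst 0
    simpa [show (fun _ : X => (0:ℝ)) = 0 from rfl] using this
  -- nonnegativity of s
  have hnn : ∀ f, 0 ≤ s f := by
    intro f
    have h1 : s (-f) = s f := by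
      have := hsmul (-1) f
      simpa using this
    have h2 : s 0 ≤ s f + s (-f) := by
      have := hadd f (-f)
      simpa using this
    nlinarith [h2, h1, hzero]
  set a : ι → ℝ := fun x => u (p x) - Cst with ha
  -- decomposition: u = ∑ a x • φ x + const Cst
  have hdec : u = (∑ x, a x • φ x) + (fun _ => Cst) := by
    funext y
    have h1 := congrFun hu y
    have h2 := congrFun hpart y
    simp only [Finset.sum_apply, Pi.smul_apply, smul_eq_mul] at h1 h2 ⊢
    simp only [ha, Pi.add_apply, Finset.sum_apply, Pi.smul_apply, smul_eq_mul, sub_mul]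
    rw [Finset.sum_sub_distrib, ← Finset.mul_sum, h2]
    rw [h1]; ring
  -- bound s u
  have hsu : s u ≤ ∑ x, |a x| * c := by
    calc s u ≤ s (∑ x, a x • φ x) + s (fun _ => Cst) := by rw [hdec]; exact hadd _ _
    _ = s (∑ x, a x • φ x) := by rw [hconst]; ring
    _ ≤ ∑ x, s (a x • φ x) := sum_seminorm s hadd hzero _
    _ ≤ ∑ x, |a x| * c := by
        apply Finset.sum_le_sum
        intro x _
        rw [hsmul]
        exact mul_le_mul_of_nonneg_left (hφ x) (abs_nonneg _)
  -- Cauchy–Schwarz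
  have habs : (∑ x, |a x| ^ 2) = ∑ x, a x ^ 2 := by simp [sq_abs]
  have hfin : (∑ x, |a x|) ^ 2 ≤ (n + 1 : ℝ) * ∑ x, a x ^ 2 := by
    have hcs := sq_sum_le_card_mul_sum_sq (s := (Finset.univ : Finset ι))
      (f := fun x => |a x|)
    have : (∑ x, |a x|) ^ 2 ≤ (Fintype.card ι : ℝ) * ∑ x, a x ^ 2 := by
      simpa [habs, Finset.card_univ] using hcs
    have hle : (Fintype.card ι : ℝ) ≤ (n : ℝ) + 1 := by
      exact_mod_cast Nat.le_succ_of_le hcard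
    have hnn2 : (0:ℝ) ≤ ∑ x, a x ^ 2 := Finset.sum_nonneg fun _ _ => sq_nonneg _
    nlinarith
  have h1 : s u ^ 2 ≤ (∑ x, |a x| * c) ^ 2 := by
    have := hnn u
    nlinarith [hsu]
  calc s u ^ 2 ≤ (∑ x, |a x| * c) ^ 2 := h1
  _ = c ^ 2 * (∑ x, |a x|) ^ 2 := by rw [← Finset.sum_mul]; ring
  _ ≤ c ^ 2 * ((n + 1 : ℝ) * ∑ x, a x ^ 2) := by
      exact mul_le_mul_of_nonneg_left hfin (by positivity)
  _ = c ^ 2 * (n + 1) * ∑ x, (u (p x) - Cst) ^ 2 := by ring
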